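/- If g₁ and g₂ are two distinct solutions of the Riccati equation g' + f₁g + f₀ + g² = 0 on I (with g₁ ≠ g₂ pointwise), and y₁, y₂ are differentiable functions satisfying y₁' = g₁y₁ − f/(g₁−g₂) and y₂' = g₂y₂ + f/(g₁−g₂), then y = y₁ + y₂ solves y'' + f₁y' + f₀y + f = 0. -/

import Mathlib

/-- If `g₁, g₂` are two distinct Riccati solutions and `y₁' = g₁ y₁ - f/(g₁-g₂)`,
`y₂' = g₂ y₂ + f/(g₁-g₂)`, then `y = y₁ + y₂` solves `y'' + f₁ y' + f₀ y + f = 0`. -/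
theorem stmt_3 (I : Set ℝ) (f₀ f₁ f g₁ g₂ y₁ y₂ : ℝ → ℝ)
    (hf₀ : ContinuousOn f₀ I) (hf₁ : ContinuousOn f₁ I) (hf : ContinuousOn f I)
    (hne : ∀ t ∈ I, g₁ t ≠ g₂ t)
    (hg₁ : ∀ t ∈ I, HasDerivAt g₁ (-(f₁ t * g₁ t + f₀ t + (g₁ t) ^ 2)) t)
    (hg₂ : ∀ t ∈ I, HasDerivAt g₂ (-(f₁ t * g₂ t + f₀ t + (g₂ t) ^ 2)) t)
    (hy₁ : ∀ t ∈ I, HasDerivAt y₁ (g₁ t * y₁ t - f t / (g₁ t - g₂ t)) t)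
    (hy₂ : ∀ t ∈ I, HasDerivAt y₂ (g₂ t * y₂ t + f t / (g₁ t - g₂ t)) t) :
    ∀ t ∈ I,
      HasDerivAt (fun s => y₁ s + y₂ s) (g₁ t * y₁ t + g₂ t * y₂ t) t ∧
      HasDerivAt (fun s => g₁ s * y₁ s + g₂ s * y₂ s)
        (-(f₁ t * (g₁ t * y₁ t + g₂ t * y₂ t) + f₀ t * (y₁ t + y₂ t) + f t)) t := by
  intro t ht
  have hsub : g₁ t - g₂ t ≠ 0 := sub_ne_zero.mpr (hne t ht)
  constructor
  · have := (hy₁ t ht).add (hy₂ t ht)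
    refine this.congr_deriv ?_
    ring
  · have := ((hg₁ t ht).mul (hy₁ t ht)).add ((hg₂ t ht).mul (hy₂ t ht))
    refine this.congr_deriv ?_
    field_simp
    ring
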